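/- Let P be an integer and m a positive integer. For every positive integer n with n > (|V_{2m}(P,−1)| + U_{2m}(P,−1)² + 1)³, if σ₂(n) − n² = V_{2m}(P,−1)·n + U_{2m}(P,−1)² + 1 (as integers), then either there exists an integer k ≥ 0 such that n = U_{2k}(P,−1) · U_{2k+2m}(P,−1) with both U_{2k}(P,−1) and U_{2k+2m}(P,−1) prime, or there exists an integer k with 0 ≤ k < m and m ≠ 2k such that n = U_{2k}(P,−1) · U_{2m−2k}(P,−1) with both U_{2k}(P,−1) and U_{2m−2k}(P,−1) prime. -/

import Mathlib

/-- Lucas sequence of the first kind: `U 0 = 0`, `U 1 = 1`,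
`U (n+2) = P * U (n+1) - Q * U n`. -/
def lucasU (P Q : ℤ) : ℕ → ℤ
  | 0 => 0
  | 1 => 1
  | n + 2 => P * lucasU P Q (n + 1) - Q * lucasU P Q n

/-- Lucas sequence of the second kind: `V 0 = 2`, `V 1 = P`,
`V (n+2) = P * V (n+1) - Q * V n`. -/
def lucasV (P Q : ℤ) : ℕ → ℤ
  | 0 => 2
  | 1 => P
  | n + 2 => P * lucasV P Q (n + 1) - Q * lucasV P Q n

set_option maxHeartbeats 1000000

namespace S7

noncomputable def u (P : ℤ) (n : ℕ) : ℤ := lucasU P (-1) n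
noncomputable def v (P : ℤ) (n : ℕ) : ℤ := lucasV P (-1) n

@[simp] lemma u0 (P : ℤ) : u P 0 = 0 := rfl
@[simp] lemma u1 (P : ℤ) : u P 1 = 1 := rfl
@[simp] lemma v0 (P : ℤ) : v P 0 = 2 := rfl
@[simp] lemma v1 (P : ℤ) : v P 1 = P := rfl
lemma urec (P : ℤ) (n : ℕ) : u P (n+2) = P * u P (n+1) + u P n := by
  show lucasU P (-1) (n+2) = _
  rw [lucasU]; ring_nf; rfl
lemma vrec (P : ℤ) (n : ℕ) : v P (n+2) = P * v P (n+1) + v P n := by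
  show lucasV P (-1) (n+2) = _
  rw [lucasV]; ring_nf; rfl
@[simp] lemma u2 (P : ℤ) : u P 2 = P := by have := urec P 0; simpa using this
@[simp] lemma v2 (P : ℤ) : v P 2 = P^2 + 2 := by have := vrec P 0; rw [this]; simp; ring

lemma seq_eq {P : ℤ} {f g : ℕ → ℤ} (hf : ∀ n, f (n+2) = P * f (n+1) + f n)
    (hg : ∀ n, g (n+2) = P * g (n+1) + g n) (h0 : f 0 = g 0) (h1 : f 1 = g 1) :
    ∀ n, f n = g n := by
  intro n
  induction n using Nat.twoStepInduction with
  | zero => exact h0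
  | one => exact h1
  | more n ih1 ih2 => rw [hf, hg, ih1, ih2]

lemma two_u_succ (P : ℤ) (n : ℕ) : 2 * u P (n+1) = P * u P n + v P n := by
  refine seq_eq (f := fun n => 2 * u P (n+1)) (g := fun n => P * u P n + v P n)
    (P := P) (fun n => ?_) (fun n => ?_) (by simp) (by simp [u2]; ring) n
  · beta_reduce
    rw [show n+2+1 = (n+1)+2 from rfl, urec]; ring
  · beta_reduce
    rw [urec, vrec]; ring

lemma two_v_succ (P : ℤ) (n : ℕ) : 2 * v P (n+1) = P * v P n + (P^2+4) * u P n := by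
  refine seq_eq (f := fun n => 2 * v P (n+1)) (g := fun n => P * v P n + (P^2+4) * u P n)
    (P := P) (fun n => ?_) (fun n => ?_) (by simp; ring) (by simp [v2, u1]; ring) n
  · beta_reduce
    rw [show n+2+1 = (n+1)+2 from rfl, vrec]; ring
  · beta_reduce
    rw [urec, vrec]; ring

lemma add_u (P : ℤ) (a b : ℕ) : 2 * u P (a+b) = u P a * v P b + v P a * u P b := by
  refine seq_eq (f := fun b => 2 * u P (a+b)) (g := fun b => u P a * v P b + v P a * u P b)
    (P := P) (fun n => ?_) (fun n => ?_) (by simp [mul_comm]) (by have := two_u_succ P a; simp only [v1, u1]; simpa using by linarith) b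
  · beta_reduce
    rw [show a+(n+2) = (a+n)+2 from by ring, show a+(n+1) = (a+n)+1 from by ring, urec]; ring
  · beta_reduce
    rw [urec, vrec]; ring

lemma add_v (P : ℤ) (a b : ℕ) :
    2 * v P (a+b) = v P a * v P b + (P^2+4) * (u P a * u P b) := by
  refine seq_eq (f := fun b => 2 * v P (a+b))
    (g := fun b => v P a * v P b + (P^2+4) * (u P a * u P b))
    (P := P) (fun n => ?_) (fun n => ?_) (by simp; ring) ?_ b
  · beta_reduce
    rw [show a+(n+2) = (a+n)+2 from by ring, show a+(n+1) = (a+n)+1 from by ring, vrec]; ring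
  · beta_reduce
    rw [urec, vrec]; ring
  · have := two_v_succ P a; simp only [v1, u1]; simpa using by linarith

lemma sub_uv (P : ℤ) (d : ℕ) : ∀ b, u P (d+b) * v P b - v P (d+b) * u P b = 2 * (-1)^b * u P d := by
  intro b
  induction b with
  | zero => simp; ring
  | succ b ih =>
    have h1 := two_u_succ P (d+b)
    have h2 := two_v_succ P b
    have h3 := two_v_succ P (d+b)
    have h4 := two_u_succ P b
    have key : 4 * (u P (d+(b+1)) * v P (b+1) - v P (d+(b+1)) * u P (b+1))
        = -4 * (u P (d+b) * v P b - v P (d+b) * u P b) := by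
      rw [show d+(b+1) = (d+b)+1 from by ring]
      linear_combination (2*v P (b+1))*h1 + (P*u P (d+b) + v P (d+b))*h2 - (2*u P (b+1))*h3 - (P*v P (d+b) + (P^2+4)*u P (d+b))*h4
    rw [ih] at key
    have : (-1:ℤ)^(b+1) = -(-1)^b := by ring
    rw [this]
    linarith

lemma pell_id (P : ℤ) : ∀ n, v P n ^ 2 - (P^2+4) * u P n ^ 2 = 4 * (-1)^n := by
  intro n
  induction n with
  | zero => simp
  | succ n ih =>
    have h1 := two_u_succ P n
    have h2 := two_v_succ P n
    have key : 4 * (v P (n+1) ^ 2 - (P^2+4) * u P (n+1) ^ 2)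
        = -4 * (v P n ^ 2 - (P^2+4) * u P n ^ 2) := by
      linear_combination (2*v P (n+1) + P*v P n + (P^2+4)*u P n)*h2 - (P^2+4)*(2*u P (n+1) + P*u P n + v P n)*h1
    rw [ih] at key
    have : (-1:ℤ)^(n+1) = -(-1)^n := by ring
    rw [this]; linarith


section pos
variable {P : ℤ}

lemma u_nonneg (hP : 1 ≤ P) : ∀ n, 0 ≤ u P n := by
  intro n
  induction n using Nat.twoStepInduction with
  | zero => simp
  | one => simp
  | more n ih1 ih2 => rw [urec]; nlinarith

lemma u_one_le (hP : 1 ≤ P) : ∀ n, 1 ≤ n → 1 ≤ u P n := by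
  intro n
  induction n using Nat.twoStepInduction with
  | zero => omega
  | one => simp
  | more n ih1 ih2 =>
    intro _
    rw [urec]
    have h1 : 1 ≤ u P (n+1) := ih2 (by omega)
    have h2 : 0 ≤ u P n := u_nonneg hP n
    nlinarith

lemma v_pos (hP : 1 ≤ P) : ∀ n, 1 ≤ v P n := by
  intro n
  induction n using Nat.twoStepInduction with
  | zero => norm_num
  | one => simpa using hP
  | more n ih1 ih2 => rw [vrec]; nlinarith

lemma u_mono (hP : 1 ≤ P) : ∀ n, u P n ≤ u P (n+1) := by
  intro n
  match n with
  | 0 => simp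
  | n+1 =>
    rw [urec]
    have h1 : 0 ≤ u P (n+1) := u_nonneg hP _
    have h2 : 0 ≤ u P n := u_nonneg hP _
    nlinarith

lemma u_mono_le (hP : 1 ≤ P) : ∀ {a b : ℕ}, a ≤ b → u P a ≤ u P b := by
  intro a b hab
  induction b with
  | zero => simp_all
  | succ b ih =>
    rcases Nat.lt_or_ge a (b+1) with h|h
    · exact le_trans (ih (by omega)) (u_mono hP b)
    · have : a = b+1 := by omega
      simp [this]

lemma u_lt_add_two (hP : 1 ≤ P) : ∀ n, u P n < u P (n+2) := by
  intro n
  rw [urec]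
  have h1 : 1 ≤ u P (n+1) := u_one_le hP (n+1) (by omega)
  have h2 : 0 ≤ u P n := u_nonneg hP n
  nlinarith

lemma v_mono (hP : 1 ≤ P) : ∀ n, 1 ≤ n → v P n ≤ v P (n+1) := by
  intro n hn
  match n, hn with
  | n+1, _ =>
    rw [vrec]
    have h1 : 1 ≤ v P (n+1) := v_pos hP _
    have h2 : 1 ≤ v P n := v_pos hP _
    nlinarith

lemma v_mono_le (hP : 1 ≤ P) : ∀ {a b : ℕ}, 1 ≤ a → a ≤ b → v P a ≤ v P b := by
  intro a b ha hab
  induction b with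
  | zero => omega
  | succ b ih =>
    rcases Nat.lt_or_ge a (b+1) with h|h
    · exact le_trans (ih (by omega)) (v_mono hP b (by omega))
    · have : a = b+1 := by omega
      simp [this]

lemma v_even_ge_three (hP : 1 ≤ P) (m : ℕ) (hm : 1 ≤ m) : 3 ≤ v P (2*m) := by
  have h2 : v P 2 ≤ v P (2*m) := v_mono_le hP (a := 2) (b := 2*m) (by omega) (by omega)
  have h3 : (3:ℤ) ≤ v P 2 := by rw [v2]; nlinarith
  linarith

lemma u_even_pos (hP : 1 ≤ P) (m : ℕ) (hm : 1 ≤ m) : 1 ≤ u P (2*m) := u_one_le hP _ (by omega)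

end pos

lemma u_zero_val : ∀ n, u 0 n = (if n % 2 = 0 then 0 else 1) := by
  intro n
  induction n using Nat.twoStepInduction with
  | zero => simp
  | one => simp
  | more n ih1 ih2 =>
    rw [urec, ih1]
    have : (n+2) % 2 = n % 2 := by omega
    simp [this]

lemma v_zero_val : ∀ n, v 0 n = (if n % 2 = 0 then 2 else 0) := by
  intro n
  induction n using Nat.twoStepInduction with
  | zero => simp
  | one => simp
  | more n ih1 ih2 =>
    rw [vrec, ih1]
    have : (n+2) % 2 = n % 2 := by omega
    simp [this]

lemma u_neg (P : ℤ) : ∀ n, u (-P) n = (-1)^(n+1) * u P n := by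
  intro n
  induction n using Nat.twoStepInduction with
  | zero => simp
  | one => simp
  | more n ih1 ih2 =>
    rw [urec, urec, ih1, ih2]
    have h1 : (-1:ℤ)^(n+1+1) = -(-1)^(n+1) := by ring
    have h2 : (-1:ℤ)^(n+2+1) = (-1)^(n+1) := by ring
    rw [h1, h2]; ring

lemma v_neg (P : ℤ) : ∀ n, v (-P) n = (-1)^n * v P n := by
  intro n
  induction n using Nat.twoStepInduction with
  | zero => simp
  | one => simp
  | more n ih1 ih2 =>
    rw [vrec, vrec, ih1, ih2]
    have h1 : (-1:ℤ)^(n+1) = -(-1)^n := by ring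
    have h2 : (-1:ℤ)^(n+2) = (-1)^n := by ring
    rw [h1, h2]; ring

lemma u_neg_even (P : ℤ) (k : ℕ) : u (-P) (2*k) = - u P (2*k) := by
  rw [u_neg]
  have : (-1:ℤ)^(2*k+1) = -1 := by
    rw [pow_succ, pow_mul]; simp
  rw [this]; ring

lemma v_neg_even (P : ℤ) (k : ℕ) : v (-P) (2*k) = v P (2*k) := by
  rw [v_neg]
  have : (-1:ℤ)^(2*k) = 1 := by rw [pow_mul]; simp
  rw [this]; ring


section pell
variable {P : ℤ}

lemma pell_no_small (hP : 1 ≤ P) (y w : ℤ) (hy1 : 1 ≤ y) (hyP : y < P) (hw : 0 ≤ w)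
    (hpell : w^2 = (P^2+4)*y^2 + 4) : False := by
  have hPy : P*y < w := by
    have h1 : (P*y)^2 < w^2 := by nlinarith
    have h2 : 0 ≤ P*y := by positivity
    nlinarith
  obtain ⟨a, ha⟩ : ∃ a, a = P*y := ⟨_, rfl⟩
  rw [← ha] at hPy
  have h3 : w = a+1 ∨ w = a+2 ∨ a+3 ≤ w := by omega
  rcases h3 with h|h|h
  · subst h; rw [ha] at hpell
    have h5 : 2*(P*y) = 4*y^2+3 := by linear_combination hpell
    obtain ⟨c, hc⟩ : ∃ c, c = y^2 := ⟨_, rfl⟩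
    rw [← hc] at h5
    obtain ⟨d, hd⟩ : ∃ d, d = P*y := ⟨_, rfl⟩
    rw [← hd] at h5
    omega
  · subst h; rw [ha] at hpell
    have h6' : 4*(y*(P-y)) = 0 := by linear_combination hpell
    have h6 : y*(P-y) = 0 := by linarith
    rcases mul_eq_zero.mp h6 with h|h
    · omega
    · omega
  · rw [ha] at h
    have hsq : (P*y+3)^2 ≤ w^2 := by nlinarith
    have h4 : 4*y*y ≤ 4*y*(P-1) := by
      apply mul_le_mul_of_nonneg_left (by linarith) (by linarith)
    nlinarith

lemma pell_classify (hP : 1 ≤ P) : ∀ (Y : ℕ) (y w : ℤ), y.natAbs ≤ Y → 0 ≤ y → 0 ≤ w →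
    w^2 = (P^2+4)*y^2 + 4 → ∃ s : ℕ, y = u P (2*s) ∧ w = v P (2*s) := by
  intro Y
  induction Y with
  | zero =>
    intro y w hY hy0 hw0 hpell
    have hy : y = 0 := by omega
    subst hy
    have hw : (w-2)*(w+2) = 0 := by linear_combination hpell
    rcases mul_eq_zero.mp hw with h|h
    · exact ⟨0, by simp, by simp; linarith⟩
    · exfalso; linarith
  | succ Y IH =>
    intro y w hY hy0 hw0 hpell
    rcases eq_or_lt_of_le hy0 with hy|hy
    · rw [← hy] at hpell
      have hw : (w-2)*(w+2) = 0 := by linear_combination hpell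
      rcases mul_eq_zero.mp hw with h|h
      · exact ⟨0, by simp [← hy], by simp; linarith⟩
      · exfalso; linarith
    · have hy1 : 1 ≤ y := hy
      have hyP : P ≤ y := by
        by_contra hcon
        exact pell_no_small hP y w hy1 (by omega) hw0 hpell
      have hPy : P*y < w := by
        have h1 : (P*y)^2 < w^2 := by nlinarith
        have h2 : 0 ≤ P*y := by positivity
        nlinarith
      have hev : Even ((w - P*y)^2) :=
        ⟨P^2*y^2 + 2*y^2 + 2 - P*y*w, by linear_combination hpell⟩
      obtain ⟨t, ht⟩ := (Int.even_pow.mp hev).1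
      have hw' : w = P*y + 2*t := by linarith
      have ht1 : 1 ≤ t := by linarith
      have hrel : P*(t*y) + t^2 = y^2 + 1 := by
        rw [hw'] at hpell
        have h4 : 4*(P*(t*y) + t^2) = 4*(y^2+1) := by linear_combination hpell
        linarith
      have hy₁0 : 0 ≤ y - P*t := by
        by_contra hcon
        push_neg at hcon
        have h5 : y + 1 ≤ P*t := by linarith
        have h6 : y*(y+1) ≤ y*(P*t) := mul_le_mul_of_nonneg_left h5 (by linarith)
        nlinarith
      have hw₁0 : 0 ≤ (P^2+2)*t - P*y := by
        by_contra hcon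
        push_neg at hcon
        have h5 : (P^2+2)*w < P*(P^2+4)*y := by rw [hw']; nlinarith
        have h6 : 0 ≤ (P^2+2)*w := by positivity
        have h7 : ((P^2+2)*w)^2 < (P*(P^2+4)*y)^2 := by nlinarith
        have h8 : ((P^2+2))^2 * w^2 = (P^2+2)^2*((P^2+4)*y^2+4) := by
          rw [hw'] at hpell; rw [hw']; linear_combination (P^2+2)^2 * hpell
        nlinarith [h7, h8, sq_nonneg y, sq_nonneg P, sq_nonneg (P*y)]
      have hPt1 : 1 ≤ P*t := by nlinarith
      have pell₁ : ((P^2+2)*t - P*y)^2 = (P^2+4)*(y - P*t)^2 + 4 := by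
        linear_combination 4*hrel
      obtain ⟨s, hs1, hs2⟩ := IH (y - P*t) ((P^2+2)*t - P*y) (by omega) hy₁0 hw₁0 pell₁
      have r1 : 2*y = (P^2+2)*(y - P*t) + P*((P^2+2)*t - P*y) := by ring
      have r2 : 2*w = (P^2+2)*((P^2+2)*t - P*y) + P*(P^2+4)*(y - P*t) := by
        rw [hw']; ring
      have i1 := add_u P (2*s) 2
      rw [u2, v2] at i1
      have i2 := add_v P (2*s) 2
      rw [u2, v2] at i2
      rw [← hs1, ← hs2] at i1 i2
      refine ⟨s+1, ?_, ?_⟩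
      · rw [show 2*(s+1) = 2*s+2 by ring]; linarith [i1, r1]
      · rw [show 2*(s+1) = 2*s+2 by ring]; linarith [i2, r2]

end pell



lemma sigma2_prime {p : ℕ} (hp : p.Prime) : ArithmeticFunction.sigma 2 p = 1 + p^2 := by
  rw [ArithmeticFunction.sigma_apply, hp.divisors]
  rw [Finset.sum_insert (by simp [Ne.symm hp.ne_one]), Finset.sum_singleton]
  simp

lemma sigma2_prime_sq {p : ℕ} (hp : p.Prime) :
    ArithmeticFunction.sigma 2 (p^2) = 1 + p^2 + p^4 := by
  rw [ArithmeticFunction.sigma_apply, Nat.sum_divisors_prime_pow hp]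
  simp [Finset.sum_range_succ]
  ring

lemma sigma2_mul {p q : ℕ} (hp : p.Prime) (hq : q.Prime) (hne : p ≠ q) :
    ArithmeticFunction.sigma 2 (p*q) = (1+p^2)*(1+q^2) := by
  have hco : Nat.Coprime p q := (Nat.coprime_primes hp hq).mpr hne
  rw [ArithmeticFunction.isMultiplicative_sigma.map_mul_of_coprime hco,
    sigma2_prime hp, sigma2_prime hq]

lemma sigma2_lower {n s : ℕ} (hd : s ∣ n) (h1 : 1 < s) (h2 : s < n) :
    1 + s^2 + n^2 ≤ ArithmeticFunction.sigma 2 n := by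
  have hn0 : n ≠ 0 := by omega
  rw [ArithmeticFunction.sigma_apply]
  have hsub : ({1, s, n} : Finset ℕ) ⊆ n.divisors := by
    intro x hx
    simp only [Finset.mem_insert, Finset.mem_singleton] at hx
    rcases hx with rfl|rfl|rfl
    · exact Nat.mem_divisors.mpr ⟨one_dvd _, hn0⟩
    · exact Nat.mem_divisors.mpr ⟨hd, hn0⟩
    · exact Nat.mem_divisors.mpr ⟨dvd_rfl, hn0⟩
  calc 1 + s^2 + n^2 = ∑ d ∈ ({1, s, n} : Finset ℕ), d^2 := by
        rw [Finset.sum_insert (by simp; omega), Finset.sum_insert (by simp; omega),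
          Finset.sum_singleton]
        simp
        ring
    _ ≤ ∑ d ∈ n.divisors, d^2 := Finset.sum_le_sum_of_subset hsub

lemma main_nonneg (P : ℤ) (hP : 0 ≤ P) (m : ℕ) (hm : 1 ≤ m) (n : ℕ) (hn : 0 < n)
    (hbig : (n : ℤ) > (|v P (2*m)| + u P (2*m)^2 + 1)^3)
    (heq : ((ArithmeticFunction.sigma 2) n : ℤ) - (n:ℤ)^2 = v P (2*m) * n + u P (2*m)^2 + 1) :
    ∃ k : ℕ, (n:ℤ) = u P (2*k) * u P (2*k + 2*m) ∧
      Prime (u P (2*k)) ∧ Prime (u P (2*k + 2*m)) := by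
  have hV2 : 2 ≤ v P (2*m) := by
    rcases eq_or_lt_of_le hP with rfl|hP1
    · rw [v_zero_val]; simp
    · have := v_even_ge_three hP1 m hm; linarith
  have hU0 : 0 ≤ u P (2*m) := by
    rcases eq_or_lt_of_le hP with rfl|hP1
    · rw [u_zero_val]; simp
    · exact u_nonneg hP1 _
  rw [abs_of_nonneg (by linarith : (0:ℤ) ≤ v P (2*m))] at hbig
  set V : ℤ := v P (2*m) with hVdef
  set U : ℤ := u P (2*m) with hUdef
  set B : ℤ := V + U^2 + 1 with hBdef
  have hB3 : 3 ≤ B := by nlinarith [sq_nonneg U]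
  have hbig' : B^3 < (n:ℤ) := hbig
  have hn27 : 27 < (n:ℤ) := by
    have h33 : (3:ℤ)^3 ≤ B^3 := pow_le_pow_left₀ (by norm_num) hB3 3
    norm_num at h33
    linarith
  have hn2 : 2 ≤ n := by omega
  have hn1 : n ≠ 1 := by omega
  have hp : n.minFac.Prime := Nat.minFac_prime hn1
  set p := n.minFac with hpdef
  have hpd : p ∣ n := Nat.minFac_dvd n
  set s := n / p with hsdef
  have hns : n = p * s := (Nat.mul_div_cancel' hpd).symm
  have hp2 : 2 ≤ p := hp.two_le
  have hs1 : 1 ≤ s := by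
    rw [hsdef]
    exact Nat.one_le_div_iff (by omega) |>.mpr (Nat.minFac_le (by omega))
  have hsd : s ∣ n := ⟨p, by rw [hns]; ring⟩
  by_cases hsone : s = 1
  · -- n is prime
    exfalso
    have hnp : n = p := by rw [hns, hsone, mul_one]
    have hσ : ArithmeticFunction.sigma 2 n = 1 + n^2 := by
      rw [hnp]; exact_mod_cast sigma2_prime hp
    rw [hσ] at heq
    push_cast at heq
    have h1 : 0 < V * n := by positivity
    nlinarith [sq_nonneg U]
  · by_cases hsprime : s.Prime
    · by_cases hps : p = s
      · -- n = p^2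
        exfalso
        have hnp : n = p^2 := by rw [hns, hps]; ring
        have hσ : ArithmeticFunction.sigma 2 n = 1 + p^2 + p^4 := by
          rw [hnp]; exact sigma2_prime_sq hp
        rw [hσ] at heq
        have hnc : (n:ℤ) = (p:ℤ)^2 := by exact_mod_cast congrArg (Nat.cast : ℕ → ℤ) hnp
        rw [hnc] at heq
        push_cast at heq
        have hpc : (2:ℤ) ≤ p := by exact_mod_cast hp2
        nlinarith [sq_nonneg U, heq]
      · -- n = p * s with p < s primes
        have hple : p ≤ s := Nat.minFac_le_of_dvd hsprime.two_le hsd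
        have hpls : p < s := lt_of_le_of_ne hple hps
        have hσ : ArithmeticFunction.sigma 2 n = (1+p^2)*(1+s^2) := by
          rw [hns]; exact sigma2_mul hp hsprime hps
        rw [hσ] at heq
        have hnc : (n:ℤ) = (p:ℤ) * s := by exact_mod_cast congrArg (Nat.cast : ℕ → ℤ) hns
        rw [hnc] at heq
        push_cast at heq
        have key : (p:ℤ)^2 + (s:ℤ)^2 = V*p*s + U^2 := by linear_combination heq
        have hpc : (2:ℤ) ≤ (p:ℤ) := by exact_mod_cast hp2
        have hsc : (2:ℤ) ≤ (s:ℤ) := by exact_mod_cast hsprime.two_le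
        have hpsc : (p:ℤ) < (s:ℤ) := by exact_mod_cast hpls
        rcases eq_or_lt_of_le hP with rfl|hP1
        · -- P = 0 : contradiction
          exfalso
          have hU : U = 0 := by rw [hUdef, u_zero_val]; simp
          have hV : V = 2 := by rw [hVdef, v_zero_val]; simp
          rw [hU, hV] at key
          have : ((p:ℤ) - s)^2 = 0 := by linear_combination key
          have := pow_eq_zero_iff (two_ne_zero) |>.mp this
          linarith [sub_eq_zero.mp this]
        · -- P ≥ 1 : Pell route
          have hP1' : 1 ≤ P := hP1
          have hU1 : 1 ≤ U := u_even_pos hP1' m hm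
          have hpell2m : V^2 = (P^2+4)*U^2 + 4 := by
            have h := pell_id P (2*m)
            have h2 : (-1:ℤ)^(2*m) = 1 := by rw [pow_mul]; simp
            rw [h2] at h
            linarith
          have hW : (2*(s:ℤ) - V*(p:ℤ))^2 = U^2*((P^2+4)*(p:ℤ)^2 + 4) := by
            linear_combination 4*key + (p:ℤ)^2*hpell2m
          have hdvd : U ∣ (2*(s:ℤ) - V*(p:ℤ)) := by
            refine (Int.pow_dvd_pow_iff (two_ne_zero)).mp ⟨(P^2+4)*(p:ℤ)^2 + 4, hW⟩
          obtain ⟨w₀, hw₀⟩ := hdvd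
          have hw₀sq : w₀^2 = (P^2+4)*(p:ℤ)^2 + 4 := by
            have h4 : U^2 * w₀^2 = U^2 * ((P^2+4)*(p:ℤ)^2+4) := by
              rw [← mul_pow, ← hw₀]; exact hW
            exact mul_left_cancel₀ (pow_ne_zero 2 (by linarith)) h4
          obtain ⟨t, hpt, hwt⟩ := pell_classify hP1' ((p:ℤ)).natAbs (p:ℤ) |w₀|
            (le_refl _) (by positivity) (abs_nonneg _) (by rw [sq_abs]; exact hw₀sq)
          rcases abs_cases w₀ with ⟨he, _⟩|⟨he, _⟩
          · -- w₀ = v P (2t)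
            rw [he] at hwt
            have hq2 : 2*(s:ℤ) = V * u P (2*t) + U * v P (2*t) := by
              rw [← hpt, ← hwt]; linarith [hw₀]
            have hadd := add_u P (2*m) (2*t)
            have hs_eq : (s:ℤ) = u P (2*m+2*t) := by
              rw [hUdef, hVdef] at hq2
              linarith [hadd, hq2]
            refine ⟨t, ?_, ?_, ?_⟩
            · rw [hnc, hpt, hs_eq, show 2*t+2*m = 2*m+2*t by ring]
            · rw [← hpt]; exact Nat.prime_iff_prime_int.mp hp
            · rw [show 2*t+2*m = 2*m+2*t by ring, ← hs_eq]
              exact Nat.prime_iff_prime_int.mp hsprime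
          · -- w₀ = -v P (2t)
            exfalso
            have hwt' : w₀ = - v P (2*t) := by linarith [hwt, he]
            have hq2 : 2*(s:ℤ) = V * u P (2*t) - U * v P (2*t) := by
              rw [← hpt]
              have : 2*(s:ℤ) - V*(p:ℤ) = U * w₀ := hw₀
              rw [hwt'] at this
              rw [hpt] at this ⊢
              linarith
            rcases le_or_gt t m with htm|hmt
            · have hidx : 2*m - 2*t + 2*t = 2*m := by omega
              have hsub := sub_uv P (2*m - 2*t) (2*t)
              rw [hidx] at hsub
              have hpw : (-1:ℤ)^(2*t) = 1 := by rw [pow_mul]; simp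
              rw [hpw] at hsub
              have hu0 : 0 ≤ u P (2*m - 2*t) := u_nonneg hP1' _
              rw [hUdef, hVdef] at hq2
              linarith [hsub, hq2]
            · have hidx : 2*t - 2*m + 2*m = 2*t := by omega
              have hsub := sub_uv P (2*t - 2*m) (2*m)
              rw [hidx] at hsub
              have hpw : (-1:ℤ)^(2*m) = 1 := by rw [pow_mul]; simp
              rw [hpw] at hsub
              have hs_eq : (s:ℤ) = u P (2*t - 2*m) := by
                rw [hUdef, hVdef] at hq2
                linarith [hsub, hq2]
              have hle : u P (2*t - 2*m) ≤ u P (2*t - 2) := u_mono_le hP1' (by omega)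
              have hlt : u P (2*t - 2) < u P (2*t) := by
                have := u_lt_add_two hP1' (2*t - 2)
                rwa [show 2*t - 2 + 2 = 2*t by omega] at this
              rw [← hpt] at hlt
              linarith
    · -- s composite : size contradiction
      exfalso
      have hs2 : 2 ≤ s := by omega
      have hsne1 : s ≠ 1 := hsone
      have hr : s.minFac.Prime := Nat.minFac_prime hsne1
      set r := s.minFac with hrdef
      have hrd : r ∣ s := Nat.minFac_dvd s
      have hstt : s = r * (s / r) := (Nat.mul_div_cancel' hrd).symm
      set q := s / r with hqdef
      clear_value q
      have hq1 : q ≠ 1 := by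
        intro h
        rw [h, mul_one] at hstt
        exact hsprime (hstt ▸ hr)
      have hq0 : q ≠ 0 := by
        intro h
        rw [h, mul_zero] at hstt
        omega
      have hq2 : 2 ≤ q := by omega
      have hqd : q ∣ n := dvd_trans (Dvd.intro_left r hstt.symm) hsd
      have hrdn : r ∣ n := hrd.trans hsd
      have hpr : p ≤ r := Nat.minFac_le_of_dvd hr.two_le hrdn
      have hpq : p ≤ q := Nat.minFac_le_of_dvd hq2 hqd
      have hps2 : p^2 ≤ s := by
        calc p^2 = p * p := by ring
          _ ≤ r * q := Nat.mul_le_mul hpr hpq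
          _ = s := hstt.symm
      have hsltn : s < n := by
        have h2s : 2*s ≤ p*s := Nat.mul_le_mul_right s hp2
        omega
      have hσ := sigma2_lower hsd (by omega : 1 < s) hsltn
      -- integer bounds
      have hpsZ : ((p:ℤ))^2 ≤ (s:ℤ) := by exact_mod_cast hps2
      have hnsZ : (n:ℤ) = (p:ℤ) * s := by exact_mod_cast congrArg (Nat.cast : ℕ → ℤ) hns
      have h1 : (n:ℤ)^2 ≤ (s:ℤ)^3 := by nlinarith [hpsZ, hnsZ, sq_nonneg ((p:ℤ))]
      have hsZ1 : (1:ℤ) ≤ (s:ℤ) := by exact_mod_cast hs1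
      have hnZ0 : (0:ℤ) < (n:ℤ) := by exact_mod_cast hn
      have h2 : (B*(n:ℤ))^3 < ((s:ℤ)^2)^3 := by
        have e2 : B^3*(n:ℤ)^3 < (n:ℤ)*(n:ℤ)^3 :=
          mul_lt_mul_of_pos_right hbig' (by positivity)
        have e4 : ((n:ℤ)^2)^2 ≤ ((s:ℤ)^3)^2 := pow_le_pow_left₀ (by positivity) h1 2
        nlinarith [e2, e4]
      have h3 : B*(n:ℤ) < (s:ℤ)^2 := by
        have := lt_of_pow_lt_pow_left₀ 3 (by positivity : (0:ℤ) ≤ (s:ℤ)^2) h2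
        exact this
      have hσZ : (1:ℤ) + (s:ℤ)^2 + (n:ℤ)^2 ≤ ((ArithmeticFunction.sigma 2) n : ℤ) := by
        exact_mod_cast hσ
      have hnZ1 : (1:ℤ) ≤ (n:ℤ) := by linarith
      nlinarith [heq, hσZ, h3, sq_nonneg U, hnZ1]


end S7

theorem stmt_7 (P : ℤ) (m : ℕ) (hm : 1 ≤ m)
    (n : ℕ) (hn : 0 < n)
    (hbig : (n : ℤ) > (|lucasV P (-1) (2 * m)| + lucasU P (-1) (2 * m) ^ 2 + 1) ^ 3)
    (heq : ((ArithmeticFunction.sigma 2) n : ℤ) - (n : ℤ) ^ 2 =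
      lucasV P (-1) (2 * m) * n + lucasU P (-1) (2 * m) ^ 2 + 1) :
    (∃ k : ℕ,
      (n : ℤ) = lucasU P (-1) (2 * k) * lucasU P (-1) (2 * k + 2 * m) ∧
      Prime (lucasU P (-1) (2 * k)) ∧ Prime (lucasU P (-1) (2 * k + 2 * m))) ∨
    (∃ k : ℕ, k < m ∧ m ≠ 2 * k ∧
      (n : ℤ) = lucasU P (-1) (2 * k) * lucasU P (-1) (2 * m - 2 * k) ∧
      Prime (lucasU P (-1) (2 * k)) ∧ Prime (lucasU P (-1) (2 * m - 2 * k))) := by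
  left
  rcases le_or_gt 0 P with hP|hP
  · exact S7.main_nonneg P hP m hm n hn hbig heq
  · have hQ : (0:ℤ) ≤ -P := by linarith
    have hv : S7.v (-P) (2*m) = S7.v P (2*m) := S7.v_neg_even P m
    have hu2 : S7.u (-P) (2*m)^2 = S7.u P (2*m)^2 := by rw [S7.u_neg_even P m]; ring
    obtain ⟨k, h1, h2, h3⟩ := S7.main_nonneg (-P) hQ m hm n hn
      (by rw [hv, hu2]; exact hbig) (by rw [hv, hu2]; exact heq)
    have e1 : S7.u (-P) (2*k) = - S7.u P (2*k) := S7.u_neg_even P k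
    have e2 : S7.u (-P) (2*k+2*m) = - S7.u P (2*k+2*m) := by
      rw [show 2*k+2*m = 2*(k+m) by ring]
      exact S7.u_neg_even P (k+m)
    rw [e1, e2] at h1
    rw [Int.prime_iff_natAbs_prime, e1, Int.natAbs_neg] at h2
    rw [Int.prime_iff_natAbs_prime, e2, Int.natAbs_neg] at h3
    refine ⟨k, ?_, ?_, ?_⟩
    · rw [h1]; show _ = S7.u P (2*k) * S7.u P (2*k+2*m); ring
    · rw [Int.prime_iff_natAbs_prime]; exact h2
    · rw [Int.prime_iff_natAbs_prime]; exact h3
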